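/- With the setup mₙ₊₁ = mₙ·[[1,1/εₙ],[1/εₙ,0]]·mₙ over F₂((1/a₀,…,1/a_k)), where m₀ is a product of matrices [[1,1/w],[1/w,0]], one has for all k ≥ 0: val(m_k[0,0]) = 0 and val(m_k[i,j]) > 0 for (i,j) ≠ (0,0), where val is the valuation assigning to a series the minimal total degree (in the inverse variables) of a nonzero term. -/
import Mathlib

section Aux

lemma pos_add_aux {x y : WithTop ℤ} (hx : (0 : WithTop ℤ) ≤ x)
    (hy : (0 : WithTop ℤ) < y) : (0 : WithTop ℤ) < x + y :=
  lt_of_lt_of_le hy (le_add_of_nonneg_left hx)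

variable {K : Type*} [Field K] (v : AddValuation K (WithTop ℤ))

/-- The key invariant. -/
def GoodM (m : Matrix (Fin 2) (Fin 2) K) : Prop :=
  v (m 0 0) = (0 : WithTop ℤ) ∧ (0 : WithTop ℤ) < v (m 0 1) ∧
    (0 : WithTop ℤ) < v (m 1 0) ∧ (0 : WithTop ℤ) < v (m 1 1)

lemma goodM_mul {m n : Matrix (Fin 2) (Fin 2) K} (hm : GoodM v m)
    (hn : GoodM v n) : GoodM v (m * n) := by
  obtain ⟨h00, h01, h10, h11⟩ := hm
  obtain ⟨g00, g01, g10, g11⟩ := hn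
  have e : ∀ i j, (m * n) i j = m i 0 * n 0 j + m i 1 * n 1 j := by
    intro i j
    rw [Matrix.mul_apply, Fin.sum_univ_two]
  have pos : ∀ {x y : K}, (0:WithTop ℤ) < v x → (0:WithTop ℤ) < v y →
      (0:WithTop ℤ) < v (x * y) := fun hx hy => by
    rw [v.map_mul]; exact pos_add_aux hx.le hy
  refine ⟨?_, ?_, ?_, ?_⟩ <;> rw [e]
  · rw [AddValuation.map_add_eq_of_lt_left]
    · rw [v.map_mul, h00, g00, add_zero]
    · rw [v.map_mul, h00, g00, add_zero]
      exact pos h01 g10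
  · refine v.map_lt_add ?_ (pos h01 g11)
    rw [v.map_mul, h00, zero_add]; exact g01
  · refine v.map_lt_add ?_ (pos h11 g10)
    rw [v.map_mul, g00, add_zero]; exact h10
  · refine v.map_lt_add ?_ (pos h11 g11)
    rw [v.map_mul]; exact pos_add_aux h10.le g01
end Aux

section Aux2
variable {K : Type*} [Field K] (v : AddValuation K (WithTop ℤ))

lemma goodM_elem {x : K} (hx : v x⁻¹ = (1 : ℤ)) :
    GoodM v !![1, x⁻¹; x⁻¹, 0] := by
  have h1 : (0 : WithTop ℤ) < v x⁻¹ := by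
    rw [hx]; exact_mod_cast (zero_lt_one : (0:ℤ) < 1)
  refine ⟨?_, ?_, ?_, ?_⟩
  · simp [v.map_one]
  · simpa using h1
  · simpa using h1
  · have : v ((!![1, x⁻¹; x⁻¹, 0] : Matrix (Fin 2) (Fin 2) K) 1 1) = ⊤ := by
      simp [v.map_zero]
    rw [this]; exact lt_of_lt_of_le h1 le_top

end Aux2

/-- `K` models the field `F₂((1/a₀,…,1/a_k))`, with additive valuation `v`
(`val φ` = minimal total degree in the inverse variables, so
`v (aᵢ)⁻¹ = 1`).  `m₀` is a nonempty product of matrices `[[1,1/w],[1/w,0]]`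
with `w` a variable, and `mₙ₊₁ = mₙ·[[1,1/εₙ],[1/εₙ,0]]·mₙ` with the `εₙ`
variables.  Then for all `k`, `val (m_k[0,0]) = 0` and `val (m_k[i,j]) > 0`
for `(i,j) ≠ (0,0)`. -/
theorem val_entries_of_m {K : Type*} [Field K] [CharP K 2]
    {ι : Type*} (a : ι → K)
    (v : AddValuation K (WithTop ℤ))
    (ha : ∀ i, v (a i)⁻¹ = (1 : ℤ))
    (W₀ : List ι) (hW₀ : W₀ ≠ [])
    (eps : ℕ → ι)
    (m : ℕ → Matrix (Fin 2) (Fin 2) K)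
    (hm0 : m 0 = (W₀.reverse.map fun w => !![1, (a w)⁻¹; (a w)⁻¹, 0]).prod)
    (hm : ∀ i,
      m (i + 1) = m i * !![1, (a (eps i))⁻¹; (a (eps i))⁻¹, 0] * m i) :
    ∀ k, v (m k 0 0) = (0 : ℤ) ∧
      ∀ i j : Fin 2, ¬(i = 0 ∧ j = 0) → (0 : ℤ) < v (m k i j) := by
  have key : ∀ k, GoodM v (m k) := by
    intro k
    induction k with
    | zero =>
      rw [hm0]
      clear hm0
      induction W₀ with
      | nil => exact absurd rfl hW₀
      | cons w t ih =>
        rcases eq_or_ne t [] with rfl | ht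
        · simpa using goodM_elem v (ha w)
        · rw [List.reverse_cons, List.map_append, List.prod_append]
          simpa using goodM_mul v (ih ht) (goodM_elem v (ha w))
    | succ n ih =>
      rw [hm n]
      exact goodM_mul v (goodM_mul v ih (goodM_elem v (ha (eps n)))) ih
  intro k
  obtain ⟨h00, h01, h10, h11⟩ := key k
  refine ⟨by exact_mod_cast h00, ?_⟩
  intro i j hij
  fin_cases i <;> fin_cases j <;> simp_all
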